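/- For t ≥ 0, let f_t : ℝ → ℝ be defined by f_t(x) = exp(2x − (1+t)eˣ), and let f̂_t(w) = ∫_{−∞}^{∞} f_t(x)e^{−iwx} dx. Then for every nonzero real number w, |f̂_t(w)| = (1/(1+t)²)·√(πw(1+w²)/sinh(πw)), and moreover |f̂_t(w)| ≤ (1/(1+t)²)·(1/cosh(λ₀w)), where λ₀ = √(π²/6 − 1). (The inequality also holds at w = 0, where |f̂_t(0)| = 1/(1+t)².) -/

import Mathlib

open Real Complex MeasureTheory Set

lemma integral_eq (t w : ℝ) (ht : 0 ≤ t) :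
    ∫ x : ℝ, (Real.exp (2 * x - (1 + t) * Real.exp x) : ℂ) *
        Complex.exp (-(Complex.I * w * x)) =
      (1 / ((1 + t : ℝ) : ℂ)) ^ (2 - Complex.I * w) * Complex.Gamma (2 - Complex.I * w) := by
  have ht1 : (0:ℝ) < 1 + t := by linarith
  have h1 : ∀ x : ℝ, (Real.exp (2 * x - (1 + t) * Real.exp x) : ℂ) *
      Complex.exp (-(Complex.I * w * x)) =
      Real.exp x • (((Real.exp x : ℝ) : ℂ) ^ ((2 - Complex.I * w) - 1) *
        Complex.exp (-(((1 + t : ℝ) : ℂ) * (Real.exp x : ℝ)))) := by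
    intro x
    rw [Complex.cpow_def_of_ne_zero (by exact_mod_cast (Real.exp_pos x).ne')]
    rw [← Complex.ofReal_log (Real.exp_pos x).le, Real.log_exp]
    rw [real_smul]
    nth_rewrite 1 [Complex.ofReal_exp]
    rw [← Complex.exp_add, ← Complex.exp_add, Complex.ofReal_exp, ← Complex.exp_add]
    congr 1
    push_cast
    ring
  simp_rw [h1]
  rw [← integral_cpow_mul_exp_neg_mul_Ioi (by norm_num : (0:ℂ).re < (2 - Complex.I * w).re) ht1]
  have h2 := integral_image_eq_integral_abs_deriv_smul (s := Set.univ) MeasurableSet.univ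
      (fun x _ => (Real.hasDerivAt_exp x).hasDerivWithinAt)
      (Real.exp_injective.injOn)
      (fun u : ℝ => ((u : ℂ) ^ ((2 - Complex.I * w) - 1) * Complex.exp (-(((1 + t : ℝ) : ℂ) * (u : ℝ)))))
  rw [Set.image_univ, Real.range_exp, MeasureTheory.setIntegral_univ] at h2
  simp_rw [abs_of_pos (Real.exp_pos _)] at h2
  exact h2.symm

lemma gamma_mul (w : ℝ) (hw : w ≠ 0) :
    Complex.Gamma (2 - Complex.I * w) * Complex.Gamma (2 + Complex.I * w) =
      ((π * w * (1 + w ^ 2) / Real.sinh (π * w) : ℝ) : ℂ) := by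
  have hiw : Complex.I * w ≠ 0 := by
    simp [Complex.I_ne_zero, Complex.ofReal_eq_zero, hw]
  have h1 : Complex.Gamma (2 + Complex.I * w) =
      (1 + Complex.I * w) * ((Complex.I * w) * Complex.Gamma (Complex.I * w)) := by
    rw [show (2:ℂ) + Complex.I * w = (1 + Complex.I * w) + 1 by ring,
      Complex.Gamma_add_one _ (by
        intro h
        apply hw
        simpa using congrArg Complex.im h),
      show (1:ℂ) + Complex.I * w = (Complex.I * w) + 1 by ring,
      Complex.Gamma_add_one _ hiw]
  have h2 : Complex.Gamma (2 - Complex.I * w) =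
      (1 - Complex.I * w) * Complex.Gamma (1 - Complex.I * w) := by
    rw [show (2:ℂ) - Complex.I * w = (1 - Complex.I * w) + 1 by ring,
      Complex.Gamma_add_one _ (by
        intro h
        apply hw
        simpa using congrArg Complex.im h)]
  have h3 : Complex.Gamma (Complex.I * w) * Complex.Gamma (1 - Complex.I * w) =
      π / Complex.sin (π * (Complex.I * w)) := Complex.Gamma_mul_Gamma_one_sub _
  have h4 : Complex.sin (π * (Complex.I * w)) = ((Real.sinh (π * w) : ℝ) : ℂ) * Complex.I := by
    rw [show (π : ℂ) * (Complex.I * w) = ((π * w : ℝ) : ℂ) * Complex.I by push_cast; ring,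
      Complex.sin_mul_I, Complex.ofReal_sinh]
  have hs : Real.sinh (π * w) ≠ 0 := by
    intro h
    rcases mul_eq_zero.mp (Real.sinh_eq_zero.mp h) with h' | h'
    · exact Real.pi_ne_zero h'
    · exact hw h'
  have hs' : ((Real.sinh (π * w) : ℝ) : ℂ) ≠ 0 := Complex.ofReal_ne_zero.mpr hs
  calc Complex.Gamma (2 - Complex.I * w) * Complex.Gamma (2 + Complex.I * w)
      = (1 - Complex.I * w) * (1 + Complex.I * w) * (Complex.I * w) *
        (Complex.Gamma (Complex.I * w) * Complex.Gamma (1 - Complex.I * w)) := by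
        rw [h1, h2]; ring
    _ = (1 - Complex.I * w) * (1 + Complex.I * w) * (Complex.I * w) *
        (π / (((Real.sinh (π * w) : ℝ) : ℂ) * Complex.I)) := by rw [h3, h4]
    _ = ((π * w * (1 + w ^ 2) / Real.sinh (π * w) : ℝ) : ℂ) := by
        rw [div_mul_eq_div_div, Complex.div_I]
        push_cast
        have hs2 : Complex.sinh (↑w * ↑π) ≠ 0 := by rw [mul_comm]; exact_mod_cast hs'
        field_simp
        linear_combination (-(w:ℂ) + ((w:ℂ) ^ 3) * (Complex.I ^ 2 - 1)) * Complex.I_sq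

lemma arith (P : ℝ) (hP1 : 6 < P) (hP2 : P ≤ 9.93) (m : ℕ) :
    (2*(m:ℝ)+5) * (2*P/3-4)^(m+2) + (2*(m:ℝ)+5)*(2*(m:ℝ)+4)*(2*(m:ℝ)+3) * (2*P/3-4)^(m+1)
      ≤ 2 * P^(m+2) := by
  set Q : ℝ := 2*P/3-4 with hQ
  have hQ0 : 0 < Q := by rw [hQ]; linarith
  have hPQ : 7/2 * Q ≤ P := by rw [hQ]; linarith
  have hP0 : 0 < P := by linarith
  induction m with
  | zero =>
    rw [hQ]
    norm_num [pow_succ]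
    nlinarith [mul_nonneg (by linarith : (0:ℝ) ≤ 9.93 - P) (by linarith : (0:ℝ) ≤ P)]
  | succ n ih =>
    have hA : (0:ℝ) < Q^(n+1) := pow_pos hQ0 _
    have hQA : (0:ℝ) < Q * Q^(n+1) := mul_pos hQ0 hA
    have step1 : (2*((n:ℝ)+1)+5) * Q^(n+1+2) + (2*((n:ℝ)+1)+5)*(2*((n:ℝ)+1)+4)*(2*((n:ℝ)+1)+3) * Q^(n+1+1)
        ≤ (7/2*Q) * ((2*(n:ℝ)+5) * Q^(n+2) + (2*(n:ℝ)+5)*(2*(n:ℝ)+4)*(2*(n:ℝ)+3) * Q^(n+1)) := by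
      have e1 : Q^(n+1+2) = Q * Q^(n+2) := by ring
      have e2 : Q^(n+1+1) = Q * Q^(n+1) := by ring
      have e3 : Q^(n+2) = Q * Q^(n+1) := by ring
      rw [e1, e2]
      have c1 : (2*((n:ℝ)+1)+5) ≤ 7/2 * (2*(n:ℝ)+5) := by
        have : (0:ℝ) ≤ (n:ℝ) := Nat.cast_nonneg n
        nlinarith
      have c2 : (2*((n:ℝ)+1)+5)*(2*((n:ℝ)+1)+4)*(2*((n:ℝ)+1)+3) ≤
          7/2 * ((2*(n:ℝ)+5)*(2*(n:ℝ)+4)*(2*(n:ℝ)+3)) := by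
        have h0 : (0:ℝ) ≤ (n:ℝ) := Nat.cast_nonneg n
        nlinarith [mul_nonneg h0 h0, mul_nonneg (mul_nonneg h0 h0) h0]
      nlinarith [mul_le_mul_of_nonneg_right c1 (le_of_lt (mul_pos hQ0 hQA)),
        mul_le_mul_of_nonneg_right c2 (le_of_lt hQA)]
    have step2 : (7/2*Q) * ((2*(n:ℝ)+5) * Q^(n+2) + (2*(n:ℝ)+5)*(2*(n:ℝ)+4)*(2*(n:ℝ)+3) * Q^(n+1))
        ≤ P * (2 * P^(n+2)) := by
      have hsum : 0 ≤ (2*(n:ℝ)+5) * Q^(n+2) + (2*(n:ℝ)+5)*(2*(n:ℝ)+4)*(2*(n:ℝ)+3) * Q^(n+1) := by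
        have : (0:ℝ) ≤ (n:ℝ) := Nat.cast_nonneg n
        positivity
      calc (7/2*Q) * ((2*(n:ℝ)+5) * Q^(n+2) + (2*(n:ℝ)+5)*(2*(n:ℝ)+4)*(2*(n:ℝ)+3) * Q^(n+1))
          ≤ P * ((2*(n:ℝ)+5) * Q^(n+2) + (2*(n:ℝ)+5)*(2*(n:ℝ)+4)*(2*(n:ℝ)+3) * Q^(n+1)) :=
            mul_le_mul_of_nonneg_right hPQ hsum
        _ ≤ P * (2 * P^(n+2)) := by
            apply mul_le_mul_of_nonneg_left _ hP0.le
            linarith [ih]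
    push_cast
    calc (2*((n:ℝ)+1)+5) * Q^(n+1+2) + (2*((n:ℝ)+1)+5)*(2*((n:ℝ)+1)+4)*(2*((n:ℝ)+1)+3) * Q^(n+1+1)
        ≤ (7/2*Q) * ((2*(n:ℝ)+5) * Q^(n+2) + (2*(n:ℝ)+5)*(2*(n:ℝ)+4)*(2*(n:ℝ)+3) * Q^(n+1)) := step1
      _ ≤ P * (2 * P^(n+2)) := step2
      _ = 2 * P^(n+1+2) := by ring

lemma pi_sq_bounds : 6 < π^2 ∧ π^2 ≤ 9.93 := by
  constructor
  · nlinarith [Real.pi_gt_three]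
  · nlinarith [Real.pi_lt_d2, Real.pi_gt_three]

lemma coeff_ineq (m : ℕ) :
    (2*π^2/3-4)^(m+2) / (Nat.factorial (2*m+4) : ℝ) + (2*π^2/3-4)^(m+1) / (Nat.factorial (2*m+2) : ℝ)
      ≤ 2 * (π^2)^(m+2) / (Nat.factorial (2*m+5) : ℝ) := by
  obtain ⟨h1, h2⟩ := pi_sq_bounds
  have h := arith (π^2) h1 h2 m
  have hQ0 : (0:ℝ) < 2*π^2/3-4 := by linarith
  have hF : (0:ℝ) < (Nat.factorial (2*m+2) : ℝ) := by positivity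
  have e4 : (Nat.factorial (2*m+4) : ℝ) = (2*(m:ℝ)+4)*(2*(m:ℝ)+3)*(Nat.factorial (2*m+2) : ℝ) := by
    rw [show 2*m+4 = (2*m+3)+1 by omega, Nat.factorial_succ,
      show 2*m+3 = (2*m+2)+1 by omega, Nat.factorial_succ]
    push_cast; ring
  have e5 : (Nat.factorial (2*m+5) : ℝ) = (2*(m:ℝ)+5)*((2*(m:ℝ)+4)*(2*(m:ℝ)+3)*(Nat.factorial (2*m+2) : ℝ)) := by
    rw [show 2*m+5 = (2*m+4)+1 by omega, Nat.factorial_succ, show (2*m+4)+1 = 2*m+5 by omega]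
    push_cast [e4]
    ring
  set Q : ℝ := 2*π^2/3-4
  set F2 : ℝ := (Nat.factorial (2*m+2) : ℝ)
  set D : ℝ := (2*(m:ℝ)+5)*((2*(m:ℝ)+4)*(2*(m:ℝ)+3)*F2)
  have hD : 0 < D := by positivity
  have eL : Q^(m+2)/((2*(m:ℝ)+4)*(2*(m:ℝ)+3)*F2) + Q^(m+1)/F2 =
      ((2*(m:ℝ)+5) * Q^(m+2) + (2*(m:ℝ)+5)*(2*(m:ℝ)+4)*(2*(m:ℝ)+3) * Q^(m+1)) / D := by
    have hm3 : (0:ℝ) < 2*(m:ℝ)+3 := by positivity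
    have hm4 : (0:ℝ) < 2*(m:ℝ)+4 := by positivity
    have hm5 : (0:ℝ) < 2*(m:ℝ)+5 := by positivity
    field_simp
    ring
  rw [e4, e5, show (2*(m:ℝ)+4)*(2*(m:ℝ)+3)*F2 = (2*(m:ℝ)+4)*((2*(m:ℝ)+3)*F2) by ring] at *
  rw [show Q^(m+2)/((2*(m:ℝ)+4)*((2*(m:ℝ)+3)*F2)) + Q^(m+1)/F2 =
      ((2*(m:ℝ)+5) * Q^(m+2) + (2*(m:ℝ)+5)*(2*(m:ℝ)+4)*(2*(m:ℝ)+3) * Q^(m+1)) / D from by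
    rw [← eL]]
  exact (div_le_div_iff_of_pos_right hD).mpr h

lemma series_ineq (w : ℝ) (hw : 0 ≤ w) :
    π * w * (1 + w^2) * (Real.cosh (2 * Real.sqrt (π^2/6-1) * w) + 1) ≤
      2 * Real.sinh (π * w) := by
  obtain ⟨hp6, hp9⟩ := pi_sq_bounds
  set l : ℝ := Real.sqrt (π^2/6-1) with hl
  have hl2 : l^2 = π^2/6-1 := Real.sq_sqrt (by linarith)
  set u : ℝ := 2 * l * w with hu
  have hA : HasSum (fun n : ℕ => 2 * ((π*w)^(2*n+1) / (Nat.factorial (2*n+1) : ℝ)))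
      (2 * Real.sinh (π*w)) := (Real.hasSum_sinh _).mul_left 2
  have hc : HasSum (fun n : ℕ => u^(2*n) / (Nat.factorial (2*n) : ℝ) +
      (if n = 0 then (1:ℝ) else 0)) (Real.cosh u + 1) :=
    (Real.hasSum_cosh u).add (hasSum_ite_eq 0 1)
  set q : ℕ → ℝ := fun n => u^(2*n) / (Nat.factorial (2*n) : ℝ) +
      (if n = 0 then (1:ℝ) else 0) with hq
  have h1 : HasSum (fun n => π*w * q n) (π*w*(Real.cosh u + 1)) := hc.mul_left _
  have h2 : HasSum (fun n => π*w^3 * q n) (π*w^3*(Real.cosh u + 1)) := hc.mul_left _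
  set f : ℕ → ℝ := fun n => Nat.casesOn n 0 (fun m => π*w^3 * q m) with hf
  have h3 : HasSum f (π*w^3*(Real.cosh u + 1)) := by
    have := (hasSum_nat_add_iff (f := f) 1).mp (by exact h2)
    simpa [hf] using this
  have hB : HasSum (fun n => π*w * q n + f n)
      (π*w*(Real.cosh u + 1) + π*w^3*(Real.cosh u + 1)) := h1.add h3
  have main : π*w*(Real.cosh u + 1) + π*w^3*(Real.cosh u + 1) ≤ 2 * Real.sinh (π*w) := by
    refine hasSum_le (fun n => ?_) hB hA
    match n with
    | 0 =>
      simp [hq, hf, Nat.factorial]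
      linarith [Real.pi_pos.le, hw, mul_nonneg Real.pi_pos.le hw]
    | 1 =>
      have e1 : q 1 = u^2/2 := by norm_num [hq, Nat.factorial]
      have e2 : f 1 = π*w^3 * 2 := by norm_num [hf, hq, Nat.factorial]
      rw [e1, e2]
      have : (Nat.factorial (2*1+1) : ℝ) = 6 := by norm_num [Nat.factorial]
      rw [this]
      have hueq : u^2 = 4*(π^2/6-1)*w^2 := by rw [hu]; rw [mul_pow, mul_pow]; rw [hl2]; ring
      apply le_of_eq
      rw [hueq]
      ring
    | (Nat.succ (Nat.succ m)) =>
      have hcoe : π*w*q (m+2) + f (m+2) =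
          π * w^(2*m+5) * ((2*π^2/3-4)^(m+2) / (Nat.factorial (2*m+4) : ℝ) +
            (2*π^2/3-4)^(m+1) / (Nat.factorial (2*m+2) : ℝ)) := by
        have hQ : ∀ k : ℕ, u^(2*k) = (2*π^2/3-4)^k * w^(2*k) := by
          intro k
          rw [hu, pow_mul, show (2*l*w)^2 = (4*l^2)*w^2 by ring, hl2, mul_pow, ← pow_mul]
          ring_nf
        simp only [hq, hf]
        simp only [Nat.succ_ne_zero, if_false, show m + 1 ≠ 0 from Nat.succ_ne_zero m,
          show m + 2 ≠ 0 from Nat.succ_ne_zero _]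
        rw [hQ (m+2), hQ (m+1), show 2*(m+2) = 2*m+4 by ring, show 2*(m+1) = 2*m+2 by ring]
        ring
      have hrhs : 2 * ((π*w)^(2*(m+2)+1) / (Nat.factorial (2*(m+2)+1) : ℝ)) =
          π * w^(2*m+5) * (2 * (π^2)^(m+2) / (Nat.factorial (2*m+5) : ℝ)) := by
        have hp : π^(2*m+5) = (π^2)^(m+2) * π := by
          rw [← pow_mul, ← pow_succ, show 2*(m+2)+1 = 2*m+5 by omega]
        rw [show 2*(m+2)+1 = 2*m+5 by ring, mul_pow, hp]
        ring
      rw [hcoe, hrhs]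
      apply mul_le_mul_of_nonneg_left (coeff_ineq m) (by positivity)
  calc π * w * (1 + w^2) * (Real.cosh u + 1) =
      π*w*(Real.cosh u + 1) + π*w^3*(Real.cosh u + 1) := by ring
    _ ≤ 2 * Real.sinh (π*w) := main

lemma gamma_abs (w : ℝ) (hw : w ≠ 0) :
    ‖Complex.Gamma (2 - Complex.I * w)‖ =
      Real.sqrt (π * w * (1 + w ^ 2) / Real.sinh (π * w)) := by
  have hconj : Complex.Gamma (2 + Complex.I * w) =
      (starRingEnd ℂ) (Complex.Gamma (2 - Complex.I * w)) := by
    rw [← Complex.Gamma_conj]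
    congr 1
    simp [Complex.ext_iff]
  have h := gamma_mul w hw
  rw [hconj, Complex.mul_conj] at h
  have h2 : ‖Complex.Gamma (2 - Complex.I * w)‖ ^ 2 =
      π * w * (1 + w ^ 2) / Real.sinh (π * w) := by
    rw [Complex.sq_norm]
    exact_mod_cast h
  rw [← Real.sqrt_sq (norm_nonneg _), h2]

lemma gamma_bound_pos (w : ℝ) (hw : 0 < w) :
    Real.sqrt (π * w * (1 + w ^ 2) / Real.sinh (π * w)) ≤
      1 / Real.cosh (Real.sqrt (π^2/6-1) * w) := by
  set l : ℝ := Real.sqrt (π^2/6-1) with hl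
  have hch : 0 < Real.cosh (l * w) := Real.cosh_pos _
  have hsh : 0 < Real.sinh (π * w) := Real.sinh_pos_iff.mpr (by positivity)
  have key : π * w * (1 + w^2) * Real.cosh (l*w)^2 ≤ Real.sinh (π*w) := by
    have := series_ineq w hw.le
    have e : Real.cosh (2 * l * w) + 1 = 2 * Real.cosh (l*w)^2 := by
      rw [show 2*l*w = 2*(l*w) by ring, Real.cosh_two_mul]
      nlinarith [Real.cosh_sq_sub_sinh_sq (l*w)]
    rw [e] at this
    linarith
  have hle : π * w * (1 + w^2) / Real.sinh (π * w) ≤ (1 / Real.cosh (l*w))^2 := by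
    rw [show (1 / Real.cosh (l*w))^2 = 1 / Real.cosh (l*w)^2 by rw [div_pow, one_pow],
      div_le_div_iff₀ hsh (by positivity)]
    linarith [key]
  calc Real.sqrt (π * w * (1 + w^2) / Real.sinh (π * w)) ≤
      Real.sqrt ((1 / Real.cosh (l*w))^2) := Real.sqrt_le_sqrt hle
    _ = 1 / Real.cosh (l*w) := Real.sqrt_sq (by positivity)

lemma gamma_bound (w : ℝ) :
    ‖Complex.Gamma (2 - Complex.I * w)‖ ≤
      1 / Real.cosh (Real.sqrt (π^2/6-1) * w) := by
  rcases lt_trichotomy w 0 with hneg | hzero | hpos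
  · have habs : ‖Complex.Gamma (2 - Complex.I * ((-w : ℝ) : ℂ))‖ =
        ‖Complex.Gamma (2 - Complex.I * (w : ℂ))‖ := by
      rw [show (2:ℂ) - Complex.I * ((-w : ℝ) : ℂ) =
        (starRingEnd ℂ) (2 - Complex.I * (w:ℂ)) by push_cast; simp [Complex.ext_iff],
        Complex.Gamma_conj, Complex.norm_conj]
    rw [← habs, show Real.sqrt (π^2/6-1) * w = -(Real.sqrt (π^2/6-1) * (-w)) by ring,
      Real.cosh_neg]
    calc _ = Real.sqrt (π * (-w) * (1 + (-w)^2) / Real.sinh (π * (-w))) :=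
        gamma_abs (-w) (by linarith)
      _ ≤ _ := gamma_bound_pos (-w) (by linarith)
  · subst hzero
    simp only [Complex.ofReal_zero, mul_zero, sub_zero, Real.cosh_zero, div_one]
    rw [show (2:ℂ) = (1:ℂ) + 1 by ring, Complex.Gamma_add_one _ one_ne_zero,
      Complex.Gamma_one]
    simp
  · calc _ = Real.sqrt (π * w * (1 + w^2) / Real.sinh (π * w)) := gamma_abs w hpos.ne'
      _ ≤ _ := gamma_bound_pos w hpos

lemma norm_integral (t w : ℝ) (ht : 0 ≤ t) :
    ‖∫ x : ℝ, (Real.exp (2 * x - (1 + t) * Real.exp x) : ℂ) *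
        Complex.exp (-(Complex.I * w * x))‖ =
      1 / (1 + t) ^ 2 * ‖Complex.Gamma (2 - Complex.I * w)‖ := by
  have ht1 : (0:ℝ) < 1 + t := by linarith
  rw [integral_eq t w ht, norm_mul,
    show (1 / ((1 + t : ℝ) : ℂ)) = (((1/(1+t) : ℝ)) : ℂ) by push_cast; ring,
    Complex.norm_cpow_eq_rpow_re_of_pos (by positivity)]
  congr 1
  rw [show (2 - Complex.I * w).re = 2 by simp]
  rw [show (2:ℝ) = ((2:ℕ):ℝ) by norm_num, Real.rpow_natCast]
  rw [div_pow, one_pow]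

theorem fourier_transform_f_t_abs
    (t : ℝ) (ht : 0 ≤ t) :
    (∀ w : ℝ, w ≠ 0 →
        ‖∫ x : ℝ, (Real.exp (2 * x - (1 + t) * Real.exp x) : ℂ) *
            Complex.exp (-(Complex.I * w * x))‖ =
          1 / (1 + t) ^ 2 * Real.sqrt (π * w * (1 + w ^ 2) / Real.sinh (π * w))) ∧
      (∀ w : ℝ,
        ‖∫ x : ℝ, (Real.exp (2 * x - (1 + t) * Real.exp x) : ℂ) *
            Complex.exp (-(Complex.I * w * x))‖ ≤
          1 / (1 + t) ^ 2 * (1 / Real.cosh (Real.sqrt (π ^ 2 / 6 - 1) * w))) := by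
  have ht1 : (0:ℝ) < 1 + t := by linarith
  constructor
  · intro w hw
    rw [norm_integral t w ht, gamma_abs w hw]
  · intro w
    rw [norm_integral t w ht]
    exact mul_le_mul_of_nonneg_left (gamma_bound w) (by positivity)
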